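/- Consider a house allocation instance where each applicant's preference list has length 2 (only the first 2 houses of each applicant's list matter), and suppose the bipartite row-element graph (with vertex set A ∪ B', B' the set of houses appearing among the first two preferences, and an edge between applicant a and house b iff b is among a's first two preferences) is connected and contains a cycle. Then there exists a Pareto optimal matching whose image contains all houses of B'. (Here |B'| ≤ |A| holds necessarily.) -/

import Mathlib

/-- A 2-column house allocation instance: every applicant has a top house and
a (distinct) second house; only these two houses of its preference list
matter. -/
structure TwoCol (A B : Type*) where
  h1 : A → B
  h2 : A → B
  distinct : ∀ a, h1 a ≠ h2 a

namespace TwoCol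

variable {A B : Type*}

/-- A (partial) matching of a 2-column instance: each applicant receives
either its top house, its second house, or nothing, and no house is given to
two applicants. -/
def IsMatching (M : TwoCol A B) (τ : A → Option B) : Prop :=
  (∀ a b, τ a = some b → b = M.h1 a ∨ b = M.h2 a) ∧
    ∀ a a' b, τ a = some b → τ a' = some b → a = a'

/-- Applicant `a` strictly prefers outcome `x` to outcome `y`
(top house ≻ second house ≻ unassigned). -/
def PrefOpt (M : TwoCol A B) (a : A) (x y : Option B) : Prop :=
  (x = some (M.h1 a) ∧ y ≠ some (M.h1 a)) ∨ (x = some (M.h2 a) ∧ y = none)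

/-- `S` is a blocking coalition of `τ`. -/
def IsBlocking (M : TwoCol A B) (τ : A → Option B) (S : Set A) : Prop :=
  S.Nonempty ∧ ∃ τ' : A → Option B, M.IsMatching τ' ∧
    (∀ a ∉ S, τ' a = τ a) ∧ ∀ a ∈ S, M.PrefOpt a (τ' a) (τ a)

/-- `τ` is a Pareto optimal matching of the 2-column instance `M`. -/
def IsPOM (M : TwoCol A B) (τ : A → Option B) : Prop :=
  M.IsMatching τ ∧ ∀ S : Set A, ¬ M.IsBlocking τ S

/-- The bipartite row-element graph of a 2-column instance: applicant `a` is
adjacent to house `b` iff `b` is one of `a`'s two listed houses. -/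
def graph (M : TwoCol A B) : SimpleGraph (A ⊕ B) where
  Adj x y :=
    (∃ a b, x = Sum.inl a ∧ y = Sum.inr b ∧ (M.h1 a = b ∨ M.h2 a = b)) ∨
    (∃ a b, y = Sum.inl a ∧ x = Sum.inr b ∧ (M.h1 a = b ∨ M.h2 a = b))
  symm := by
    constructor
    rintro x y (⟨a, b, h1, h2, h3⟩ | ⟨a, b, h1, h2, h3⟩)
    · exact Or.inr ⟨a, b, h1, h2, h3⟩
    · exact Or.inl ⟨a, b, h1, h2, h3⟩
  loopless := by constructor; rintro x (⟨a, b, rfl, h2, _⟩ | ⟨a, b, rfl, h2, _⟩) <;> simp at h2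


open SimpleGraph Finset

section GraphAux

variable {V : Type*} {G : SimpleGraph V}

lemma exists_parent (hconn : G.Connected) (x0 : V) (v : V) :
    ∃ u, v ≠ x0 → G.Adj v u ∧ G.dist u x0 + 1 = G.dist v x0 := by
  by_cases h : v = x0
  · exact ⟨v, fun hv => absurd h hv⟩
  obtain ⟨p, hp⟩ := hconn.exists_walk_length_eq_dist v x0
  have hnil : ¬ p.Nil := SimpleGraph.Walk.not_nil_of_ne h
  refine ⟨p.getVert 1, fun _ => ⟨SimpleGraph.Walk.adj_snd hnil, ?_⟩⟩
  have h1 : G.dist (p.getVert 1) x0 ≤ p.tail.length := SimpleGraph.dist_le _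
  have h2 : p.tail.length + 1 = p.length := SimpleGraph.Walk.length_tail_add_one hnil
  have h3 : G.dist v x0 ≤ G.dist v (p.getVert 1) + G.dist (p.getVert 1) x0 :=
    hconn.dist_triangle
  have h4 : G.dist v (p.getVert 1) ≤ 1 := by
    rw [SimpleGraph.dist_eq_one_iff_adj.mpr (SimpleGraph.Walk.adj_snd hnil)]
  have h5 : 0 < G.dist v x0 := hconn.pos_dist_of_ne h
  omega

lemma card_le_card_edgeSet [Fintype V] [Fintype G.edgeSet] (hconn : G.Connected)
    (hcyc : ¬ G.IsAcyclic) :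
    Fintype.card V ≤ Fintype.card G.edgeSet := by
  classical
  unfold SimpleGraph.IsAcyclic at hcyc
  push_neg at hcyc
  obtain ⟨w, c, hc⟩ := hcyc
  choose par hpar using exists_parent hconn w
  -- support facts for the cycle
  have hnil : ¬ c.Nil := hc.not_nil
  have hlen3 : 3 ≤ c.length := hc.three_le_length
  have hsupnd : c.support.tail.Nodup := hc.support_nodup
  have hsupfin : c.support.toFinset = c.support.tail.toFinset := by
    conv_lhs => rw [c.support_eq_cons]
    rw [List.toFinset_cons]
    have : w ∈ c.support.tail := by
      cases c with
      | nil => simp at hnil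
      | cons h q => simpa using q.end_mem_support
    rw [Finset.insert_eq_self.mpr (by simpa using this)]
  have hsupcard : c.support.toFinset.card = c.length := by
    rw [hsupfin, List.toFinset_card_of_nodup hsupnd]
    have h1 := c.length_support
    have h2 : c.support.tail.length = c.support.length - 1 := List.length_tail
    omega
  -- minimal-distance vertex on the cycle
  obtain ⟨vmin, hvminmem, hvminmin⟩ :=
    (c.support.toFinset).exists_min_image (fun v => G.dist v w)
      ⟨w, by simp [c.start_mem_support]⟩
  -- some cycle edge is not an owned edge
  have hmiss : ∃ e ∈ c.edges, ∀ v : V, v ≠ w → e ≠ s(v, par v) := by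
    by_contra hall
    push_neg at hall
    have hall' : ∀ e : Sym2 V, ∃ v, e ∈ c.edges → (v ≠ w ∧ e = s(v, par v)) := by
      intro e
      by_cases he : e ∈ c.edges
      · obtain ⟨v, hv, hev⟩ := hall e he
        exact ⟨v, fun _ => ⟨hv, hev⟩⟩
      · exact ⟨w, fun h => absurd h he⟩
    choose own hown using hall'
    have hcard := Finset.card_le_card_of_injOn
      (t := c.support.toFinset.erase vmin) own
      (fun e he => by
        have he' : e ∈ c.edges := List.mem_toFinset.mp he
        obtain ⟨hne, heq⟩ := hown e he'
        rw [Finset.mem_coe, Finset.mem_erase]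
        have hesup : own e ∈ c.support := by
          rw [heq] at he'; exact c.fst_mem_support_of_mem_edges he'
        have hpsup : par (own e) ∈ c.support := by
          rw [heq] at he'; exact c.snd_mem_support_of_mem_edges he'
        refine ⟨?_, List.mem_toFinset.mpr hesup⟩
        intro hvm
        have h1 := hvminmin _ (List.mem_toFinset.mpr hpsup)
        have h2 := (hpar (own e) hne).2
        rw [hvm] at h1 h2
        omega)
      (fun e he e' he' h => by
        simp only [Finset.mem_coe, List.mem_toFinset] at he he'
        rw [(hown e he).2, (hown e' he').2, h])
    rw [Finset.card_erase_of_mem hvminmem, hsupcard,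
      List.toFinset_card_of_nodup hc.edges_nodup, c.length_edges] at hcard
    omega
  obtain ⟨estar, hestar, hestarmiss⟩ := hmiss
  have hestarE : estar ∈ G.edgeSet := c.edges_subset_edgeSet hestar
  let f : V → G.edgeSet := fun v =>
    if hv : v ≠ w then ⟨s(v, par v), ((hpar v hv).1)⟩ else ⟨estar, hestarE⟩
  have hfinj : Function.Injective f := by
    intro v v' heq
    by_cases hv : v ≠ w <;> by_cases hv' : v' ≠ w
    · simp only [f, dif_pos hv, dif_pos hv', Subtype.ext_iff, Sym2.eq_iff] at heq
      rcases heq with ⟨rfl, -⟩ | ⟨h1, h2⟩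
      · rfl
      · exfalso
        have d1 := (hpar v hv).2
        have d2 := (hpar v' hv').2
        rw [← h1] at d2
        rw [h2] at d1
        omega
    · exfalso
      simp only [f, dif_pos hv, dif_neg hv', Subtype.ext_iff] at heq
      exact hestarmiss v hv heq.symm
    · exfalso
      simp only [f, dif_neg hv, dif_pos hv', Subtype.ext_iff] at heq
      exact hestarmiss v' hv' heq
    · push_neg at hv hv'; rw [hv, hv']
  exact Fintype.card_le_of_injective f hfinj

lemma mem_of_walk {W : Set V} (hW : ∀ ⦃x y⦄, G.Adj x y → x ∈ W → y ∈ W) :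
    ∀ {u v : V}, G.Walk u v → u ∈ W → v ∈ W := by
  intro u v p
  induction p with
  | nil => exact id
  | cons h q ih => exact fun hu => ih (hW h hu)

end GraphAux

-- aux in TwoCol ns

lemma graph_adj (M : TwoCol A B) (a : A) (b : B) (h : M.h1 a = b ∨ M.h2 a = b) :
    M.graph.Adj (Sum.inl a) (Sum.inr b) :=
  Or.inl ⟨a, b, rfl, rfl, h⟩

lemma card_edgeSet (M : TwoCol A B) [Fintype A] [Fintype B] [Fintype M.graph.edgeSet] :
    Fintype.card M.graph.edgeSet = 2 * Fintype.card A := by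
  classical
  have hbij : Function.Bijective (fun x : A ⊕ A => match x with
      | Sum.inl a => (⟨s(Sum.inl a, Sum.inr (M.h1 a)), M.graph_adj a _ (Or.inl rfl)⟩ :
          M.graph.edgeSet)
      | Sum.inr a => ⟨s(Sum.inl a, Sum.inr (M.h2 a)), M.graph_adj a _ (Or.inr rfl)⟩) := by
    constructor
    · rintro (a | a) (a' | a') heq <;>
        simp only [Subtype.ext_iff, Sym2.eq_iff, Sum.inl.injEq, Sum.inr.injEq,
          and_false, false_and, or_false, reduceCtorEq, false_or] at heq
      · rw [heq.1]
      · exact absurd (heq.1 ▸ heq.2) (M.distinct a')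
      · exact absurd (heq.1 ▸ heq.2.symm) (M.distinct a')
      · rw [heq.1]
    · rintro ⟨e, he⟩
      induction e using Sym2.inductionOn with
      | hf x y =>
        rw [SimpleGraph.mem_edgeSet] at he
        rcases he with ⟨a, b, hx, hy, hb | hb⟩ | ⟨a, b, hy, hx, hb | hb⟩
        · exact ⟨Sum.inl a, by subst hx hy hb; rfl⟩
        · exact ⟨Sum.inr a, by subst hx hy hb; rfl⟩
        · exact ⟨Sum.inl a, by subst hx hy hb; simp [Sym2.eq_swap]⟩
        · exact ⟨Sum.inr a, by subst hx hy hb; simp [Sym2.eq_swap]⟩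
  calc Fintype.card M.graph.edgeSet = Fintype.card (A ⊕ A) :=
        (Fintype.card_of_bijective hbij).symm
    _ = 2 * Fintype.card A := by simp [Fintype.card_sum, two_mul]

lemma card_B_le_card_A (M : TwoCol A B) [Fintype A] [Fintype B]
    (hconn : M.graph.Connected) (hcyc : ¬ M.graph.IsAcyclic) :
    Fintype.card B ≤ Fintype.card A := by
  classical
  have h1 := card_le_card_edgeSet hconn hcyc
  rw [M.card_edgeSet, Fintype.card_sum] at h1
  omega

lemma exists_injective (M : TwoCol A B) [Fintype A] [Fintype B]
    (hconn : M.graph.Connected) (hcyc : ¬ M.graph.IsAcyclic) :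
    ∃ g : B → A, Function.Injective g ∧ ∀ b, M.h1 (g b) = b ∨ M.h2 (g b) = b := by
  classical
  set t : B → Finset A := fun b => Finset.univ.filter (fun a => M.h1 a = b ∨ M.h2 a = b) with ht
  have hall : ∀ s : Finset B, s.card ≤ (s.biUnion t).card := by
    by_contra hbad
    push_neg at hbad
    obtain ⟨S, hSmem, hSmin⟩ := Finset.exists_min_image
      (Finset.univ.filter fun s : Finset B => (s.biUnion t).card < s.card)
      (fun s => s.card) (by
        obtain ⟨s, hs⟩ := hbad
        exact ⟨s, by simp [hs]⟩)
    rw [Finset.mem_filter] at hSmem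
    have hSbad : (S.biUnion t).card < S.card := hSmem.2
    -- erasing any element does not change the neighborhood
    have key : ∀ b ∈ S, (S.erase b).biUnion t = S.biUnion t := by
      intro b hb
      have hsub : (S.erase b).biUnion t ⊆ S.biUnion t :=
        Finset.biUnion_subset_biUnion_of_subset_left t (Finset.erase_subset b S)
      have hnotbad : ¬ (((S.erase b).biUnion t).card < (S.erase b).card) := by
        intro hcon
        have := hSmin (S.erase b) (by simp [hcon])
        have := Finset.card_erase_of_mem hb
        have := Finset.card_pos.mpr ⟨b, hb⟩
        omega
      push_neg at hnotbad
      have hle : (S.biUnion t).card ≤ ((S.erase b).biUnion t).card := by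
        have := Finset.card_erase_of_mem hb
        omega
      exact Finset.eq_of_subset_of_card_le hsub hle
    -- hence any applicant incident to S has both houses in S
    have both : ∀ a : A, (M.h1 a ∈ S → M.h2 a ∈ S) ∧ (M.h2 a ∈ S → M.h1 a ∈ S) := by
      have main : ∀ (a : A) (b : B), b ∈ S → (M.h1 a = b ∨ M.h2 a = b) →
          (M.h1 a ∈ S ∧ M.h2 a ∈ S) := by
        intro a b hb hab
        have ha : a ∈ S.biUnion t := Finset.mem_biUnion.mpr ⟨b, hb, by simp [ht, hab]⟩
        rw [← key b hb] at ha
        obtain ⟨c, hc, hac⟩ := Finset.mem_biUnion.mp ha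
        simp only [ht, Finset.mem_filter] at hac
        obtain ⟨hcne, hcS⟩ := Finset.mem_erase.mp hc
        rcases hab with hab | hab <;> rcases hac.2 with hac2 | hac2
        · exact absurd (hac2.symm.trans hab) hcne
        · exact ⟨by rw [hab]; exact hb, by rw [hac2]; exact hcS⟩
        · exact ⟨by rw [hac2]; exact hcS, by rw [hab]; exact hb⟩
        · exact absurd (hac2.symm.trans hab) hcne
      intro a
      exact ⟨fun h1 => (main a (M.h1 a) h1 (Or.inl rfl)).2,
        fun h2 => (main a (M.h2 a) h2 (Or.inr rfl)).1⟩
    -- the closure set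
    set W : Set (A ⊕ B) := fun x => match x with
      | Sum.inl a => M.h1 a ∈ S ∨ M.h2 a ∈ S
      | Sum.inr b => b ∈ S with hW
    have hclosed : ∀ ⦃x y⦄, M.graph.Adj x y → x ∈ W → y ∈ W := by
      rintro x y (⟨a, b, rfl, rfl, hb⟩ | ⟨a, b, rfl, rfl, hb⟩) hx
      · -- x = inl a, y = inr b
        rcases hx with h1 | h2
        · rcases hb with hb | hb
          · exact hb ▸ h1
          · exact hb ▸ (both a).1 h1
        · rcases hb with hb | hb
          · exact hb ▸ (both a).2 h2
          · exact hb ▸ h2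
      · -- x = inr b, y = inl a
        rcases hb with hb | hb
        · exact Or.inl (hb ▸ hx)
        · exact Or.inr (hb ▸ hx)
    obtain ⟨b0, hb0⟩ : S.Nonempty := Finset.card_pos.mp (by omega)
    have hWall : ∀ v, v ∈ W := by
      intro v
      obtain ⟨p⟩ := hconn.preconnected (Sum.inr b0) v
      exact mem_of_walk hclosed p hb0
    have hSuniv : S = Finset.univ := Finset.eq_univ_iff_forall.mpr fun b => hWall (Sum.inr b)
    have hNuniv : S.biUnion t = Finset.univ := by
      apply Finset.eq_univ_iff_forall.mpr
      intro a
      have ha := hWall (Sum.inl a)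
      rcases ha with h1 | h2
      · exact Finset.mem_biUnion.mpr ⟨M.h1 a, h1, by simp [ht]⟩
      · exact Finset.mem_biUnion.mpr ⟨M.h2 a, h2, by simp [ht]⟩
    rw [hSuniv] at hNuniv hSbad
    rw [hNuniv] at hSbad
    simp only [Finset.card_univ] at hSbad
    exact absurd hSbad (not_lt.mpr (M.card_B_le_card_A hconn hcyc))
  obtain ⟨g, hginj, hgmem⟩ := (Finset.all_card_le_biUnion_card_iff_exists_injective t).mp hall
  refine ⟨g, hginj, fun b => ?_⟩
  have := hgmem b
  simp only [ht, Finset.mem_filter] at this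
  exact this.2

end TwoCol

/-- in a 2-column instance whose bipartite row-element graph is
connected and contains a cycle, there is a Pareto optimal matching whose image
contains all listed houses. (We take `B` to consist exactly of the listed
houses.) -/
theorem stmt16 {A B : Type*} [Fintype A] [Fintype B] (M : TwoCol A B)
    (hlisted : ∀ b : B, ∃ a, M.h1 a = b ∨ M.h2 a = b)
    (hconn : M.graph.Connected) (hcyc : ¬ M.graph.IsAcyclic) :
    ∃ τ : A → Option B, M.IsPOM τ ∧ ∀ b : B, ∃ a, τ a = some b := by
  classical
  obtain ⟨g, hginj, hg⟩ := M.exists_injective hconn hcyc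
  -- the base matching assigning each house its applicant
  set τ0 : A → Option B := fun a => if h : ∃ b, g b = a then some h.choose else none with hτ0
  have hτ0g : ∀ b, τ0 (g b) = some b := by
    intro b
    have h : ∃ b', g b' = g b := ⟨b, rfl⟩
    simp only [hτ0, dif_pos h]
    exact congrArg some (hginj h.choose_spec)
  have hτ0good : M.IsMatching τ0 ∧ ∀ b, ∃ a, τ0 a = some b := by
    refine ⟨⟨?_, ?_⟩, fun b => ⟨g b, hτ0g b⟩⟩
    · intro a b hab
      simp only [hτ0] at hab
      split_ifs at hab with h
      · have hbc : h.choose = b := Option.some.inj hab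
        have hspec := h.choose_spec
        rw [hbc] at hspec
        rcases hg b with h1 | h1
        · exact Or.inl (by rw [← hspec]; exact h1.symm)
        · exact Or.inr (by rw [← hspec]; exact h1.symm)
    · intro a a' b ha ha'
      simp only [hτ0] at ha ha'
      split_ifs at ha ha' with h h'
      · have e1 : g b = a := by
          have := Option.some.inj ha; rw [← this]; exact h.choose_spec
        have e2 : g b = a' := by
          have := Option.some.inj ha'; rw [← this]; exact h'.choose_spec
        rw [← e1, ← e2]
  -- maximize the number of applicants receiving their top house
  have hfin : Fintype (A → Option B) := Fintype.ofFinite _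
  let Good : Finset (A → Option B) :=
    Finset.univ.filter (fun τ => M.IsMatching τ ∧ ∀ b, ∃ a, τ a = some b)
  have hGoodmem : ∀ τ, τ ∈ Good ↔ (M.IsMatching τ ∧ ∀ b, ∃ a, τ a = some b) := by
    intro τ; simp [Good]
  obtain ⟨τ, hτGood, hτmax⟩ := Finset.exists_max_image Good
    (fun τ => (Finset.univ.filter (fun a => τ a = some (M.h1 a))).card)
    ⟨τ0, (hGoodmem τ0).mpr hτ0good⟩
  obtain ⟨hτmatch, hτcover⟩ := (hGoodmem τ).mp hτGood
  refine ⟨τ, ⟨hτmatch, ?_⟩, hτcover⟩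
  -- Pareto optimality
  rintro S ⟨hSne, τ', hτ'match, hout, himp⟩
  -- houses received by coalition members
  have hsome : ∀ a : ↥S, ∃ b, τ' a.1 = some b := by
    rintro ⟨a, ha⟩
    rcases himp a ha with ⟨h, -⟩ | ⟨h, -⟩ <;> exact ⟨_, h⟩
  choose bb hbb using hsome
  -- the τ-holder of each house
  choose hold hholdspec using hτcover
  -- holders of coalition houses are in the coalition
  have hFmem : ∀ a : ↥S, hold (bb a) ∈ S := by
    intro a
    by_contra hnot
    have h1 : τ' (hold (bb a)) = some (bb a) := (hout _ hnot).trans (hholdspec (bb a))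
    have h2 := hτ'match.2 _ _ _ h1 (hbb a)
    rw [h2] at hnot
    exact hnot a.2
  let F : ↥S → ↥S := fun a => ⟨hold (bb a), hFmem a⟩
  have hFinj : Function.Injective F := by
    intro a a' h
    have h1 : hold (bb a) = hold (bb a') := congrArg Subtype.val h
    have h2 : (some (bb a) : Option B) = some (bb a') := by
      rw [← hholdspec (bb a), ← hholdspec (bb a'), h1]
    have hbbeq : bb a = bb a' := Option.some.inj h2
    exact Subtype.ext (hτ'match.2 a.1 a'.1 (bb a') (by rw [← hbbeq]; exact hbb a) (hbb a'))
  have hFsurj : Function.Surjective F := Finite.surjective_of_injective hFinj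
  -- every coalition member is assigned under τ
  have hassigned : ∀ a ∈ S, ∃ c, τ a = some c := by
    intro a ha
    obtain ⟨a', ha'⟩ := hFsurj ⟨a, ha⟩
    have : hold (bb a') = a := congrArg Subtype.val ha'
    exact ⟨bb a', by rw [← this]; exact hholdspec (bb a')⟩
  -- so each coalition member trades its second house for its top house
  have htrade : ∀ a ∈ S, τ' a = some (M.h1 a) ∧ τ a = some (M.h2 a) := by
    intro a ha
    rcases himp a ha with ⟨h1, h2⟩ | ⟨-, h2⟩
    · refine ⟨h1, ?_⟩
      obtain ⟨c, hc⟩ := hassigned a ha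
      rcases hτmatch.1 a c hc with rfl | rfl
      · exact absurd hc h2
      · exact hc
    · obtain ⟨c, hc⟩ := hassigned a ha
      rw [h2] at hc
      exact absurd hc (by simp)
  -- τ' is also a covering matching
  have hτ'Good : τ' ∈ Good := by
    rw [hGoodmem]
    refine ⟨hτ'match, fun b => ?_⟩
    by_cases hmem : hold b ∈ S
    · obtain ⟨a', ha'⟩ := hFsurj ⟨hold b, hmem⟩
      have h1 : hold (bb a') = hold b := congrArg Subtype.val ha'
      have h2 : (some (bb a') : Option B) = some b := by
        rw [← hholdspec (bb a'), ← hholdspec b, h1]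
      exact ⟨a'.1, by rw [hbb a', Option.some.inj h2]⟩
    · exact ⟨hold b, (hout _ hmem).trans (hholdspec b)⟩
  -- but τ' has strictly more top-house assignments
  have hssub : (Finset.univ.filter (fun a => τ a = some (M.h1 a))) ⊂
      (Finset.univ.filter (fun a => τ' a = some (M.h1 a))) := by
    rw [Finset.ssubset_iff_of_subset]
    · obtain ⟨a, ha⟩ := hSne
      refine ⟨a, ?_, ?_⟩
      · simp only [Finset.mem_filter, Finset.mem_univ, true_and]
        exact (htrade a ha).1
      · simp only [Finset.mem_filter, Finset.mem_univ, true_and]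
        rw [(htrade a ha).2]
        intro hcon
        exact M.distinct a (Option.some.inj hcon).symm
    · intro a ha
      simp only [Finset.mem_filter, Finset.mem_univ, true_and] at ha ⊢
      by_cases hmem : a ∈ S
      · rw [(htrade a hmem).2] at ha
        exact absurd (Option.some.inj ha).symm (M.distinct a)
      · rw [hout a hmem]; exact ha
  exact absurd (hτmax τ' hτ'Good) (not_le.mpr (Finset.card_lt_card hssub))
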